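/- arXiv:1411.2732 — 2 statements merged into one kernel-verified Lean document; each statement's English description precedes it below -/
import Mathlib

section
/- Let P be a probability measure on ℝ with CDF F and F⁻ its left-continuous version, τ ∈ (0,1), and 𝐅 the primitive of F vanishing at 0. Then q̄ minimizes q ↦ 𝐅(q) - τ·q over ℝ if and only if F⁻(q̄) ≤ τ ≤ F(q̄), i.e., q̄ is a τ-quantile of P. -/
open MeasureTheory

noncomputable def rho (τ : ℝ) (x : ℝ) : ℝ := if x ≤ 0 then (τ - 1) * x else τ * x

noncomputable def cdf' (P : Measure ℝ) (x : ℝ) : ℝ := (P (Set.Iic x)).toReal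
noncomputable def primF (P : Measure ℝ) (x : ℝ) : ℝ := ∫ u in (0:ℝ)..x, cdf' P u

open Set Filter Topology in
lemma cdf'_mono (P : Measure ℝ) [IsProbabilityMeasure P] : Monotone (cdf' P) := fun a b h =>
  ENNReal.toReal_mono (measure_ne_top _ _) (measure_mono (Iic_subset_Iic.2 h))

lemma cdf'_intInt (P : Measure ℝ) [IsProbabilityMeasure P] (a b : ℝ) :
    IntervalIntegrable (cdf' P) volume a b :=
  (cdf'_mono P).intervalIntegrable

lemma primF_sub (P : Measure ℝ) [IsProbabilityMeasure P] (p q : ℝ) :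
    primF P q - primF P p = ∫ u in p..q, cdf' P u := by
  simp only [primF]
  rw [intervalIntegral.integral_interval_sub_left (cdf'_intInt P 0 q) (cdf'_intInt P 0 p)]

lemma int_le_right (P : Measure ℝ) [IsProbabilityMeasure P] {p q : ℝ} (h : p ≤ q) :
    ∫ u in p..q, cdf' P u ≤ (q - p) * cdf' P q := by
  have := intervalIntegral.integral_mono_on h (cdf'_intInt P p q) intervalIntegrable_const
    (fun x hx => cdf'_mono P hx.2)
  simpa [smul_eq_mul] using this

lemma left_le_int (P : Measure ℝ) [IsProbabilityMeasure P] {p q : ℝ} (h : p ≤ q) :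
    (q - p) * cdf' P p ≤ ∫ u in p..q, cdf' P u := by
  have := intervalIntegral.integral_mono_on h intervalIntegrable_const (cdf'_intInt P p q)
    (fun x hx => cdf'_mono P hx.1)
  simpa [smul_eq_mul] using this

open Set Filter Topology in
theorem stmt13 (P : Measure ℝ) [IsProbabilityMeasure P] (τ : ℝ) (hτ : τ ∈ Set.Ioo (0:ℝ) 1)
    (qbar : ℝ) :
    (∀ q : ℝ, primF P qbar - τ * qbar ≤ primF P q - τ * q) ↔
      ((P (Set.Iio qbar)).toReal ≤ τ ∧ τ ≤ (P (Set.Iic qbar)).toReal) := by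
  constructor
  · intro hmin
    have keyR : ∀ x, qbar < x → τ ≤ cdf' P x := by
      intro x hx
      have h1 := hmin x
      rw [show primF P x - τ * x = primF P x - primF P qbar + primF P qbar - τ * x by ring,
        ] at h1
      have h2 : τ * (x - qbar) ≤ primF P x - primF P qbar := by linarith
      rw [primF_sub P qbar x] at h2
      have h3 := int_le_right P hx.le
      have hpos : 0 < x - qbar := by linarith
      have : τ * (x - qbar) ≤ cdf' P x * (x - qbar) := by nlinarith
      exact le_of_mul_le_mul_right this hpos
    have keyL : ∀ x, x < qbar → cdf' P x ≤ τ := by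
      intro x hx
      have h1 := hmin x
      have h2 : primF P qbar - primF P x ≤ τ * (qbar - x) := by linarith
      rw [primF_sub P x qbar] at h2
      have h3 := left_le_int P hx.le
      have hpos : 0 < qbar - x := by linarith
      have : cdf' P x * (qbar - x) ≤ τ * (qbar - x) := by nlinarith
      exact le_of_mul_le_mul_right this hpos
    constructor
    · -- left part via increasing union
      set s : ℕ → Set ℝ := fun n => Iic (qbar - 1 / (n + 1)) with hs
      have hmono : Monotone s := by
        intro n m hnm
        apply Iic_subset_Iic.2
        have h1 : (1:ℝ) / (m + 1) ≤ 1 / (n + 1) := by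
          apply one_div_le_one_div_of_le (by positivity)
          exact_mod_cast by omega
        linarith
      have hU : (⋃ n, s n) = Iio qbar := by
        ext x
        simp only [hs, mem_iUnion, mem_Iic, mem_Iio]
        constructor
        · rintro ⟨n, hn⟩
          have : (0:ℝ) < 1 / (n + 1) := by positivity
          linarith
        · intro hx
          obtain ⟨n, hn⟩ := exists_nat_one_div_lt (sub_pos.2 hx)
          exact ⟨n, by linarith⟩
      have ht := tendsto_measure_iUnion_atTop (μ := P) hmono
      rw [hU] at ht
      have ht' : Tendsto (fun n => (P (s n)).toReal) atTop (𝓝 (P (Iio qbar)).toReal) :=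
        (ENNReal.tendsto_toReal (measure_ne_top _ _)).comp ht
      refine le_of_tendsto ht' (Eventually.of_forall fun n => ?_)
      apply keyL
      have : (0:ℝ) < 1 / (n + 1) := by positivity
      linarith
    · -- right part via right continuity of the CDF
      have hcdf : cdf' P = ⇑(ProbabilityTheory.cdf P) := by
        funext x
        rw [ProbabilityTheory.cdf_eq_real]
        rfl
      have hc : ContinuousWithinAt (cdf' P) (Ici qbar) qbar := by
        rw [hcdf]; exact (ProbabilityTheory.cdf P).right_continuous qbar
      have ht : Tendsto (cdf' P) (𝓝[>] qbar) (𝓝 (cdf' P qbar)) :=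
        hc.tendsto.mono_left (nhdsWithin_mono _ Ioi_subset_Ici_self)
      exact ge_of_tendsto ht (eventually_nhdsWithin_of_forall fun x hx => keyR x hx)
  · rintro ⟨h1, h2⟩ q
    rcases le_or_gt qbar q with h | h
    · have hint := left_le_int P h
      rw [← primF_sub P qbar q] at hint
      have : (q - qbar) * τ ≤ (q - qbar) * cdf' P qbar :=
        mul_le_mul_of_nonneg_left h2 (sub_nonneg.2 h)
      have hc : cdf' P qbar = (P (Iic qbar)).toReal := rfl
      nlinarith
    · have hae : cdf' P ≤ᵐ[volume.restrict (Icc q qbar)] fun _ => τ := by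
        have h0 : (volume.restrict (Icc q qbar)) {qbar} = 0 := by
          rw [Measure.restrict_apply (measurableSet_singleton _)]
          exact measure_mono_null inter_subset_left Real.volume_singleton
        have hne : ∀ᵐ u ∂(volume.restrict (Icc q qbar)), u ≠ qbar :=
          ae_iff.2 (by simpa using h0)
        filter_upwards [ae_restrict_mem measurableSet_Icc, hne] with u hu hu'
        have hult : u < qbar := lt_of_le_of_ne hu.2 hu'
        calc cdf' P u ≤ (P (Iio qbar)).toReal :=
              ENNReal.toReal_mono (measure_ne_top _ _)
                (measure_mono (Iic_subset_Iio.2 hult))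
          _ ≤ τ := h1
      have hle : ∫ u in q..qbar, cdf' P u ≤ ∫ _ in q..qbar, τ :=
        intervalIntegral.integral_mono_ae_restrict h.le (cdf'_intInt P q qbar)
          intervalIntegrable_const hae
      rw [intervalIntegral.integral_const, smul_eq_mul] at hle
      have := primF_sub P q qbar
      linarith
end

section
/- Let P be a probability measure on ℝ, τ ∈ (0,1), and Φ(q) = ∫_ℝ (ρ_τ(x - q) - ρ_τ(x)) dP(x). Then the right derivative of Φ at any point q̄ equals P((-∞, q̄]) - τ. -/
open MeasureTheory Filter Topology

lemma rho_lip {τ : ℝ} (hτ : τ ∈ Set.Ioo (0:ℝ) 1) (a b : ℝ) :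
    |rho τ a - rho τ b| ≤ |a - b| := by
  obtain ⟨h0, h1⟩ := hτ
  simp only [rho]
  split_ifs with ha hb hb <;>
  · rw [abs_le]
    constructor <;>
      nlinarith [le_abs_self (a - b), neg_abs_le (a - b), abs_nonneg (a - b)]

lemma rho_meas (τ : ℝ) : Measurable (rho τ) := by
  unfold rho
  exact Measurable.ite (measurableSet_le measurable_id measurable_const)
    (measurable_const.mul measurable_id) (measurable_const.mul measurable_id)

theorem stmt16 (P : Measure ℝ) [IsProbabilityMeasure P] (τ : ℝ) (hτ : τ ∈ Set.Ioo (0:ℝ) 1)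
    (qbar : ℝ) :
    HasDerivWithinAt (fun q : ℝ => ∫ x, (rho τ (x - q) - rho τ x) ∂P)
      ((P (Set.Iic qbar)).toReal - τ) (Set.Ici qbar) qbar := by
  obtain ⟨hτ0, hτ1⟩ := hτ
  have hmeas : ∀ q : ℝ, AEStronglyMeasurable (fun x => rho τ (x - q) - rho τ x) P :=
    fun q => (((rho_meas τ).comp (measurable_id.sub measurable_const)).sub
      (rho_meas τ)).aestronglyMeasurable
  have hint : ∀ q : ℝ, Integrable (fun x => rho τ (x - q) - rho τ x) P := by
    intro q
    refine (integrable_const |q|).mono' (hmeas q) ?_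
    filter_upwards with x
    have := rho_lip ⟨hτ0, hτ1⟩ (x - q) x
    simpa using this
  rw [hasDerivWithinAt_iff_tendsto_slope]
  have hIoi : Set.Ici qbar \ {qbar} = Set.Ioi qbar := by
    ext y
    simp [Set.mem_diff, lt_iff_le_and_ne, eq_comm, and_comm]
  rw [hIoi]
  set f : ℝ → ℝ := fun x => if x ≤ qbar then 1 - τ else -τ with hf
  set F : ℝ → ℝ → ℝ := fun q x => (rho τ (x - q) - rho τ (x - qbar)) / (q - qbar) with hF
  have hFmeas : ∀ q : ℝ, AEStronglyMeasurable (F q) P := by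
    intro q
    exact ((((rho_meas τ).comp (measurable_id.sub measurable_const)).sub
      ((rho_meas τ).comp (measurable_id.sub measurable_const))).div_const _).aestronglyMeasurable
  have key : Tendsto (fun q => ∫ x, F q x ∂P) (nhdsWithin qbar (Set.Ioi qbar))
      (𝓝 (∫ x, f x ∂P)) := by
    apply tendsto_integral_filter_of_dominated_convergence (fun _ => (1:ℝ))
    · filter_upwards with q using hFmeas q
    · filter_upwards [self_mem_nhdsWithin] with q hq
      filter_upwards with x
      have hq' : qbar < q := hq
      have h1 := rho_lip ⟨hτ0, hτ1⟩ (x - q) (x - qbar)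
      have h2 : |(x - q) - (x - qbar)| = q - qbar := by
        rw [show (x - q) - (x - qbar) = -(q - qbar) by ring, abs_neg,
          abs_of_pos (by linarith)]
      rw [hF]
      simp only [Real.norm_eq_abs, abs_div, abs_of_pos (show (0:ℝ) < q - qbar by linarith)]
      rw [div_le_one (by linarith)]
      linarith [h1, h2.symm.le, h2.le]
    · exact integrable_const 1
    · filter_upwards with x
      by_cases hx : x ≤ qbar
      · have : ∀ᶠ q in nhdsWithin qbar (Set.Ioi qbar), F q x = f x := by
          filter_upwards [self_mem_nhdsWithin] with q hq
          have hq' : qbar < q := hq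
          rw [hF, hf]
          simp only [rho, if_pos (show x - q ≤ 0 by linarith),
            if_pos (show x - qbar ≤ 0 by linarith), if_pos hx]
          rw [div_eq_iff (show q - qbar ≠ 0 by linarith)]
          ring
        exact Tendsto.congr' (this.mono fun q h => h.symm) tendsto_const_nhds
      · push_neg at hx
        have : ∀ᶠ q in nhdsWithin qbar (Set.Ioi qbar), F q x = f x := by
          filter_upwards [Ioo_mem_nhdsGT_of_mem ⟨le_refl qbar, hx⟩] with q hq
          obtain ⟨hq1, hq2⟩ := hq
          rw [hF, hf]
          simp only [rho, if_neg (show ¬ x - q ≤ 0 by linarith),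
            if_neg (show ¬ x - qbar ≤ 0 by linarith), if_neg (not_le.mpr hx)]
          rw [div_eq_iff (show q - qbar ≠ 0 by linarith)]
          ring
        exact Tendsto.congr' (this.mono fun q h => h.symm) tendsto_const_nhds
  have hfint : ∫ x, f x ∂P = (P (Set.Iic qbar)).toReal - τ := by
    have hfeq : f = fun x => (Set.Iic qbar).indicator (fun _ => (1:ℝ)) x - τ := by
      funext x
      by_cases hx : x ≤ qbar <;> simp [hf, Set.indicator, hx]
    rw [hfeq, integral_sub _ (integrable_const τ)]
    · rw [integral_indicator_const _ measurableSet_Iic, integral_const]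
      simp
      rfl
    · exact (integrable_const 1).indicator measurableSet_Iic
  rw [← hfint]
  refine key.congr' ?_
  filter_upwards [self_mem_nhdsWithin] with q hq
  have hq' : qbar < q := hq
  have hne : q - qbar ≠ 0 := by linarith
  rw [slope_def_field]
  rw [← integral_sub (hint q) (hint qbar)]
  have : (fun x => (rho τ (x - q) - rho τ x) - (rho τ (x - qbar) - rho τ x))
      = fun x => rho τ (x - q) - rho τ (x - qbar) := by
    funext x; ring
  rw [this]
  rw [hF]
  simp only [integral_div]
end
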